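/- Let n ≥ 2 and m ≥ 1 be integers. The ℂ-linear span of the bracket monomials p_{i₁j₁}⋯p_{i_mj_m} whose valence scheme is a Rumer diagram (i.e., whose edge multiset {(i₁,j₁),…,(i_m,j_m)} has no two crossing edges) equals the ℂ-linear span of all bracket monomials p_{i₁j₁}⋯p_{i_mj_m} with 1 ≤ i_s < j_s ≤ n for s = 1,…,m, inside the polynomial ring ℂ[x₁⁽¹⁾, x₂⁽¹⁾, …, x₁⁽ⁿ⁾, x₂⁽ⁿ⁾]. -/

import Mathlib

open MvPolynomial

/-- Two chords `(i,j)` and `(k,l)` (with `i < j`, `k < l`) of a circle with `n` marked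
points cross iff `i < k < j < l` or `k < i < l < j`. -/
def Crosses {n : ℕ} (e f : Fin n × Fin n) : Prop :=
  (e.1 < f.1 ∧ f.1 < e.2 ∧ e.2 < f.2) ∨ (f.1 < e.1 ∧ e.1 < f.2 ∧ f.2 < e.2)

/-- The bracket `p_{ab} = x₁⁽ᵃ⁾x₂⁽ᵇ⁾ − x₂⁽ᵃ⁾x₁⁽ᵇ⁾` in the polynomial ring
`ℂ[x₁⁽¹⁾, x₂⁽¹⁾, …, x₁⁽ⁿ⁾, x₂⁽ⁿ⁾]`. -/
noncomputable def bracket (n : ℕ) (a b : Fin n) : MvPolynomial (Fin n × Fin 2) ℂ :=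
  X (a, 0) * X (b, 1) - X (a, 1) * X (b, 0)

/-- The bracket monomial `p_{i₁j₁}⋯p_{i_mj_m}` whose valence scheme is the multiset `E`
of edges `(i₁,j₁),…,(i_m,j_m)`. -/
noncomputable def bracketMonomial (n : ℕ) (E : Multiset (Fin n × Fin n)) :
    MvPolynomial (Fin n × Fin 2) ℂ :=
  (E.map fun e => bracket n e.1 e.2).prod

instance {n : ℕ} (e f : Fin n × Fin n) : Decidable (Crosses e f) := by
  unfold Crosses; infer_instance

lemma crosses_comm {n : ℕ} (e f : Fin n × Fin n) : Crosses e f ↔ Crosses f e := by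
  unfold Crosses; tauto

lemma not_crosses_self {n : ℕ} (e : Fin n × Fin n) : ¬ Crosses e e := by
  unfold Crosses; omega

lemma plucker (n : ℕ) (i j k l : Fin n) :
    bracket n i k * bracket n j l
      = bracket n i j * bracket n k l + bracket n i l * bracket n j k := by
  unfold bracket; ring

lemma bracketMonomial_cons (n : ℕ) (e : Fin n × Fin n) (S : Multiset (Fin n × Fin n)) :
    bracketMonomial n (e ::ₘ S) = bracket n e.1 e.2 * bracketMonomial n S := by
  simp [bracketMonomial, Multiset.map_cons, Multiset.prod_cons]

/-- crossing indicator -/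
def ind {n : ℕ} (e f : Fin n × Fin n) : ℕ := if Crosses e f then 1 else 0

/-- total (ordered-pair) crossing count of a multiset of edges -/
def crossCount {n : ℕ} (E : Multiset (Fin n × Fin n)) : ℕ :=
  (E.map fun e => (E.filter fun f => Crosses e f).card).sum

lemma card_filter_eq {n : ℕ} (e : Fin n × Fin n) (S : Multiset (Fin n × Fin n)) :
    (Multiset.filter (fun f => Crosses e f) S).card = (S.map (ind e)).sum := by
  induction S using Multiset.induction with
  | empty => simp
  | cons a s ih =>
    rw [Multiset.filter_cons, Multiset.map_cons, Multiset.sum_cons, ← ih]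
    by_cases h : Crosses e a
    · rw [if_pos h]; simp [ind, h]; omega
    · rw [if_neg h]; simp [ind, h]

lemma crossCount_cons {n : ℕ} (e : Fin n × Fin n) (S : Multiset (Fin n × Fin n)) :
    crossCount (e ::ₘ S) = 2 * (S.map fun f => ind e f).sum + crossCount S := by
  unfold crossCount
  rw [Multiset.map_cons, Multiset.sum_cons, Multiset.filter_cons]
  rw [if_neg (not_crosses_self e)]
  have : (S.map fun f => ((e ::ₘ S).filter fun g => Crosses f g).card)
      = S.map fun f => ind e f + (S.filter fun g => Crosses f g).card := by
    apply Multiset.map_congr rfl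
    intro f hf
    rw [Multiset.filter_cons]
    by_cases h : Crosses f e
    · rw [if_pos h]; simp [ind, (crosses_comm e f).mpr h]; omega
    · rw [if_neg h]
      have : ¬ Crosses e f := fun hh => h ((crosses_comm e f).mp hh)
      simp [ind, this]
  rw [this, Multiset.sum_map_add, zero_add, card_filter_eq]
  ring

lemma key1 {n : ℕ} {i j k l u v : Fin n} (h1 : i < j) (h2 : j < k) (h3 : k < l) (huv : u < v) :
    ind (i,j) (u,v) + ind (k,l) (u,v) ≤ ind (i,k) (u,v) + ind (j,l) (u,v) := by
  have hor : (Crosses (i,j) (u,v) ∨ Crosses (k,l) (u,v)) →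
      (Crosses (i,k) (u,v) ∨ Crosses (j,l) (u,v)) := by
    simp only [Crosses, Fin.lt_def] at *; omega
  have hand : (Crosses (i,j) (u,v) ∧ Crosses (k,l) (u,v)) →
      (Crosses (i,k) (u,v) ∧ Crosses (j,l) (u,v)) := by
    simp only [Crosses, Fin.lt_def] at *; omega
  unfold ind; split_ifs <;> simp_all

lemma key2 {n : ℕ} {i j k l u v : Fin n} (h1 : i < j) (h2 : j < k) (h3 : k < l) (huv : u < v) :
    ind (i,l) (u,v) + ind (j,k) (u,v) ≤ ind (i,k) (u,v) + ind (j,l) (u,v) := by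
  have hor : (Crosses (i,l) (u,v) ∨ Crosses (j,k) (u,v)) →
      (Crosses (i,k) (u,v) ∨ Crosses (j,l) (u,v)) := by
    simp only [Crosses, Fin.lt_def] at *; omega
  have hand : (Crosses (i,l) (u,v) ∧ Crosses (j,k) (u,v)) →
      (Crosses (i,k) (u,v) ∧ Crosses (j,l) (u,v)) := by
    simp only [Crosses, Fin.lt_def] at *; omega
  unfold ind; split_ifs <;> simp_all

/-- crossCount of a two-cons configuration -/
lemma crossCount_two {n : ℕ} (a b : Fin n × Fin n) (T : Multiset (Fin n × Fin n)) :
    crossCount (a ::ₘ b ::ₘ T)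
      = 2 * ind a b + 2 * ((T.map (ind a)).sum + (T.map (ind b)).sum) + crossCount T := by
  rw [crossCount_cons, crossCount_cons, Multiset.map_cons, Multiset.sum_cons]
  ring

lemma crossCount_lt_of_key {n : ℕ} {a b a' b' : Fin n × Fin n}
    (T : Multiset (Fin n × Fin n))
    (hT : ∀ g ∈ T, g.1 < g.2)
    (hcross : Crosses a b) (hncross : ¬ Crosses a' b')
    (hkey : ∀ g ∈ T, g.1 < g.2 → ind a' g + ind b' g ≤ ind a g + ind b g) :
    crossCount (a' ::ₘ b' ::ₘ T) < crossCount (a ::ₘ b ::ₘ T) := by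
  rw [crossCount_two, crossCount_two]
  have h1 : ind a' b' = 0 := by simp [ind, hncross]
  have h2 : ind a b = 1 := by simp [ind, hcross]
  have hsum : (T.map (ind a')).sum + (T.map (ind b')).sum
      ≤ (T.map (ind a)).sum + (T.map (ind b)).sum := by
    have e1 : (T.map (ind a')).sum + (T.map (ind b')).sum
        = (T.map fun g => ind a' g + ind b' g).sum := (Multiset.sum_map_add).symm
    have e2 : (T.map (ind a)).sum + (T.map (ind b)).sum
        = (T.map fun g => ind a g + ind b g).sum := (Multiset.sum_map_add).symm
    rw [e1, e2]
    exact Multiset.sum_map_le_sum_map _ _ fun g hg => hkey g hg (hT g hg)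
  omega

/-- Main induction: every increasing bracket monomial lies in the span of the
noncrossing (Rumer) ones. -/
lemma mem_span_rumer (n m : ℕ) : ∀ (c : ℕ) (E : Multiset (Fin n × Fin n)),
    crossCount E ≤ c → Multiset.card E = m → (∀ e ∈ E, e.1 < e.2) →
    bracketMonomial n E ∈ Submodule.span ℂ
      {g : MvPolynomial (Fin n × Fin 2) ℂ |
        ∃ E' : Multiset (Fin n × Fin n), Multiset.card E' = m ∧ (∀ e ∈ E', e.1 < e.2) ∧
          (∀ e ∈ E', ∀ f ∈ E', ¬ Crosses e f) ∧ g = bracketMonomial n E'} := by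
  intro c
  induction c using Nat.strong_induction_on with
  | _ c ih =>
  intro E hc hcard hincr
  by_cases hR : ∀ e ∈ E, ∀ f ∈ E, ¬ Crosses e f
  · exact Submodule.subset_span ⟨E, hcard, hincr, hR, rfl⟩
  push_neg at hR
  obtain ⟨e, he, f, hf, hef⟩ := hR
  have hne : e ≠ f := by rintro rfl; exact not_crosses_self e hef
  -- WLOG: obtain i<j<k<l with the two crossing edges (i,k),(j,l) both in E
  obtain ⟨i, j, k, l, h1, h2, h3, hik, hjl, hneq⟩ :
      ∃ i j k l : Fin n, i < j ∧ j < k ∧ k < l ∧ (i,k) ∈ E ∧ (j,l) ∈ E ∧ (i,k) ≠ (j,l) := by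
    rcases hef with ⟨q1, q2, q3⟩ | ⟨q1, q2, q3⟩
    · exact ⟨e.1, f.1, e.2, f.2, q1, q2, q3, by simpa using he, by simpa using hf,
        fun h => absurd (congrArg Prod.fst h) (ne_of_lt q1)⟩
    · exact ⟨f.1, e.1, f.2, e.2, q1, q2, q3, by simpa using hf, by simpa using he,
        fun h => absurd (congrArg Prod.fst h) (ne_of_lt q1)⟩
  -- decompose E
  have hjl' : (j,l) ∈ E.erase (i,k) := (Multiset.mem_erase_of_ne (Ne.symm hneq)).mpr hjl
  set T := (E.erase (i,k)).erase (j,l) with hT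
  have hE1 : E.erase (i,k) = (j,l) ::ₘ T := (Multiset.cons_erase hjl').symm
  have hE : E = (i,k) ::ₘ (j,l) ::ₘ T := by
    rw [← hE1]; exact (Multiset.cons_erase hik).symm
  have hTmem : ∀ g ∈ T, g ∈ E := by
    intro g hg
    exact Multiset.mem_of_mem_erase (Multiset.mem_of_mem_erase (hT ▸ hg))
  have hTincr : ∀ g ∈ T, g.1 < g.2 := fun g hg => hincr g (hTmem g hg)
  -- the Plücker exchange
  have hsplit : bracketMonomial n E
      = bracketMonomial n ((i,j) ::ₘ (k,l) ::ₘ T)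
        + bracketMonomial n ((i,l) ::ₘ (j,k) ::ₘ T) := by
    rw [hE]
    simp only [bracketMonomial_cons]
    have h := plucker n i j k l
    rw [← mul_assoc, ← mul_assoc, ← mul_assoc, h]
    ring
  -- crossing facts
  have hcr : Crosses (i,k) (j,l) := Or.inl ⟨h1, h2, h3⟩
  have hnc1 : ¬ Crosses (i,j) (k,l) := by
    simp only [Crosses, Fin.lt_def] at *; omega
  have hnc2 : ¬ Crosses (i,l) (j,k) := by
    simp only [Crosses, Fin.lt_def] at *; omega
  have hlt1 : crossCount ((i,j) ::ₘ (k,l) ::ₘ T) < crossCount E := by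
    rw [hE]
    exact crossCount_lt_of_key T hTincr hcr hnc1
      (fun g hg hguv => by obtain ⟨u, v⟩ := g; exact key1 h1 h2 h3 hguv)
  have hlt2 : crossCount ((i,l) ::ₘ (j,k) ::ₘ T) < crossCount E := by
    rw [hE]
    exact crossCount_lt_of_key T hTincr hcr hnc2
      (fun g hg hguv => by obtain ⟨u, v⟩ := g; exact key2 h1 h2 h3 hguv)
  have hcardT : Multiset.card T + 2 = m := by
    have := hcard; rw [hE] at this; simpa using this
  have hcard1 : Multiset.card ((i,j) ::ₘ (k,l) ::ₘ T) = m := by simpa using hcardT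
  have hcard2 : Multiset.card ((i,l) ::ₘ (j,k) ::ₘ T) = m := by simpa using hcardT
  have hincr1 : ∀ g ∈ ((i,j) ::ₘ (k,l) ::ₘ T), g.1 < g.2 := by
    intro g hg
    rcases Multiset.mem_cons.mp hg with rfl | hg
    · exact h1
    rcases Multiset.mem_cons.mp hg with rfl | hg
    · exact h3
    · exact hTincr g hg
  have hincr2 : ∀ g ∈ ((i,l) ::ₘ (j,k) ::ₘ T), g.1 < g.2 := by
    intro g hg
    rcases Multiset.mem_cons.mp hg with rfl | hg
    · exact h1.trans (h2.trans h3)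
    rcases Multiset.mem_cons.mp hg with rfl | hg
    · exact h2
    · exact hTincr g hg
  have hle1 : crossCount ((i,j) ::ₘ (k,l) ::ₘ T) < c := lt_of_lt_of_le hlt1 hc
  have hle2 : crossCount ((i,l) ::ₘ (j,k) ::ₘ T) < c := lt_of_lt_of_le hlt2 hc
  rw [hsplit]
  exact Submodule.add_mem _
    (ih _ hle1 _ le_rfl hcard1 hincr1)
    (ih _ hle2 _ le_rfl hcard2 hincr2)

theorem span_rumer_bracket_monomials_eq_span_bracket_monomials
    (n m : ℕ) (hn : 2 ≤ n) (hm : 1 ≤ m) :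
    Submodule.span ℂ
        {g : MvPolynomial (Fin n × Fin 2) ℂ |
          ∃ E : Multiset (Fin n × Fin n), Multiset.card E = m ∧ (∀ e ∈ E, e.1 < e.2) ∧
            (∀ e ∈ E, ∀ f ∈ E, ¬ Crosses e f) ∧ g = bracketMonomial n E}
      = Submodule.span ℂ
          {g : MvPolynomial (Fin n × Fin 2) ℂ |
            ∃ E : Multiset (Fin n × Fin n), Multiset.card E = m ∧ (∀ e ∈ E, e.1 < e.2) ∧
              g = bracketMonomial n E} := by
  apply le_antisymm
  · apply Submodule.span_mono
    rintro g ⟨E, hE1, hE2, _, hE4⟩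
    exact ⟨E, hE1, hE2, hE4⟩
  · rw [Submodule.span_le]
    rintro g ⟨E, hE1, hE2, rfl⟩
    exact mem_span_rumer n m (crossCount E) E le_rfl hE1 hE2
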